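/- Let s ∈ (0,1), n = 1, σ* = 2s - 1 > 0, r₀ > 1, and for r > r₀ define g̃(x) = C·|x|^{σ*} for 3r/2 < |x| < 2r and g̃(x) = 0 otherwise, where C > 0. Then for every x with r₀ < |x| < r, the annulus B_{2r}(x) \ B_{3r/2}(x) in the y-variable (i.e. points y with 3r/2 < |x - y| < 2r) satisfies |y| ≤ 3r for all such y, and consequently (-Δ)^s g̃(x) ≤ -C·c(s)·r^{-1}·∫_{3r/2}^{2r} t^{σ*} dt / r^{2s} ≤ -C·c'(s)·r^{-1} for constants c(s), c'(s) > 0 independent of r and C. -/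

import Mathlib

open Real Set MeasureTheory

/-- The one-dimensional fractional Laplacian `(-Δ)^s u (x)` (up to the positive
normalization constant `C_{1,s}`). -/
noncomputable def fracLap1 (s : ℝ) (u : ℝ → ℝ) (x : ℝ) : ℝ :=
  ∫ y : ℝ, (u x - u y) / |x - y| ^ (1 + 2*s)

/-- estimate (3.10) in Lemma 3.3: Let `n = 1`, `σ* = 2s - 1 > 0`,
`r₀ > 1`, and for `r > r₀` let `g̃(x) = C |x|^{σ*}` for `3r/2 < |x| < 2r`, `= 0`
otherwise, with `C > 0`. Then for every `x` with `r₀ < |x| < r`, every `y` with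
`3r/2 < |x - y| < 2r` satisfies `|y| ≤ 3r`, and there are constants
`c, c' > 0` depending only on `s` (independent of `r` and `C`) with
`(-Δ)^s g̃(x) ≤ -C c r⁻¹ (∫_{3r/2}^{2r} t^{σ*} dt)/r^{2s} ≤ -C c' r⁻¹`. -/
theorem stmt18 (s : ℝ) (hs : s ∈ Set.Ioo (0:ℝ) 1) (hσ : (0:ℝ) < 2*s - 1)
    (r₀ : ℝ) (hr₀ : 1 < r₀) :
    ∃ c c' : ℝ, 0 < c ∧ 0 < c' ∧
      ∀ r : ℝ, r₀ < r → ∀ C : ℝ, 0 < C →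
        (∀ x y : ℝ, r₀ < |x| → |x| < r →
          3*r/2 < |x - y| → |x - y| < 2*r → |y| ≤ 3*r) ∧
        ∀ x : ℝ, r₀ < |x| → |x| < r →
          fracLap1 s
              (fun z : ℝ => if 3*r/2 < |z| ∧ |z| < 2*r then C * |z| ^ (2*s - 1)
                else 0) x
            ≤ -C * c * r⁻¹ * (∫ t in (3*r/2)..(2*r), t ^ (2*s - 1)) / r ^ (2*s) ∧
          -C * c * r⁻¹ * (∫ t in (3*r/2)..(2*r), t ^ (2*s - 1)) / r ^ (2*s)
            ≤ -C * c' * r⁻¹ := by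
  obtain ⟨hs0, hs1⟩ := hs
  have hc3 : (0:ℝ) < (3:ℝ) ^ (-(1+2*s)) := Real.rpow_pos_of_pos (by norm_num) _
  have hK : (0:ℝ) < ((2:ℝ)^(2*s) - (3/2:ℝ)^(2*s))/(2*s) :=
    div_pos (sub_pos.mpr (Real.rpow_lt_rpow (by norm_num) (by norm_num) (by linarith)))
      (by linarith)
  refine ⟨(3:ℝ) ^ (-(1+2*s)),
    (3:ℝ) ^ (-(1+2*s)) * (((2:ℝ)^(2*s) - (3/2:ℝ)^(2*s))/(2*s)), hc3, mul_pos hc3 hK, ?_⟩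
  intro r hr C hC
  have hr0 : (0:ℝ) < r := by linarith
  have hrs : (0:ℝ) < r ^ (2*s) := Real.rpow_pos_of_pos hr0 _
  constructor
  · intro x y hx1 hx2 h1 h2
    have h3 : |y| - |x| ≤ |y - x| := abs_sub_abs_le_abs_sub y x
    rw [abs_sub_comm] at h3
    linarith
  intro x hx1 hx2
  have hxr : |x| < r := hx2
  have hxabs : (0:ℝ) ≤ |x| := abs_nonneg x
  set g : ℝ → ℝ := fun z => if 3*r/2 < |z| ∧ |z| < 2*r then C * |z| ^ (2*s - 1) else 0
    with hgdef
  have hgx : g x = 0 := by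
    rw [hgdef]
    simp only
    rw [if_neg]
    rintro ⟨h, -⟩
    linarith
  have hg_nonneg : ∀ y, 0 ≤ g y := by
    intro y
    rw [hgdef]
    simp only
    split
    · exact mul_nonneg hC.le (Real.rpow_nonneg (abs_nonneg y) _)
    · exact le_rfl
  set F : ℝ → ℝ := fun y => (g x - g y) / |x - y| ^ (1 + 2*s) with hFdef
  have hfval : fracLap1 s g x = ∫ y : ℝ, F y := rfl
  have hF_nonpos : ∀ y, F y ≤ 0 := by
    intro y
    apply div_nonpos_of_nonpos_of_nonneg
    · rw [hgx]; simpa using hg_nonneg y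
    · exact Real.rpow_nonneg (abs_nonneg _) _
  -- F is supported in Ioo (-(2r)) (2r) and bounded, hence integrable
  have hFsupp : ∀ y, y ∉ Ioo (-(2*r)) (2*r) → F y = 0 := by
    intro y hy
    have hy2 : ¬ |y| < 2*r := by
      rw [abs_lt]; intro ⟨a, b⟩; exact hy ⟨by linarith, b⟩
    have hgy : g y = 0 := by
      rw [hgdef]; simp only; rw [if_neg]; rintro ⟨-, h⟩; exact hy2 h
    simp [hFdef, hgy, hgx]
  have hFmeas : Measurable F := by
    apply Measurable.div
    · apply Measurable.sub measurable_const
      rw [hgdef]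
      apply Measurable.ite
      · exact (measurable_abs (measurableSet_Ioo (a := 3*r/2) (b := 2*r)))
      · exact measurable_const.mul (Measurable.pow measurable_abs measurable_const)
      · exact measurable_const
    · exact Measurable.pow ((measurable_const.sub measurable_id).abs) measurable_const
  have hFbdd : ∀ y, ‖F y‖ ≤ C * (2*r) ^ (2*s-1) / (r/2) ^ (1+2*s) := by
    intro y
    by_cases hy : 3*r/2 < |y| ∧ |y| < 2*r
    · have hgy : g y = C * |y| ^ (2*s-1) := by rw [hgdef]; simp only; rw [if_pos hy]
      have hxy : r/2 ≤ |x - y| := by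
        have h3 : |y| - |x| ≤ |y - x| := abs_sub_abs_le_abs_sub y x
        rw [abs_sub_comm] at h3
        linarith [hy.1]
      have hden : (r/2) ^ (1+2*s) ≤ |x - y| ^ (1+2*s) :=
        Real.rpow_le_rpow (by linarith) hxy (by linarith)
      have hdenpos : (0:ℝ) < (r/2) ^ (1+2*s) := Real.rpow_pos_of_pos (by linarith) _
      have hnum : g y ≤ C * (2*r) ^ (2*s-1) := by
        rw [hgy]
        exact mul_le_mul_of_nonneg_left
          (Real.rpow_le_rpow (abs_nonneg y) hy.2.le (by linarith)) hC.le
      have : ‖F y‖ = g y / |x - y| ^ (1+2*s) := by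
        rw [hFdef]
        simp only
        rw [hgx, zero_sub, norm_div, norm_neg, Real.norm_of_nonneg (hg_nonneg y),
          Real.norm_of_nonneg (Real.rpow_nonneg (abs_nonneg _) _)]
      rw [this]
      exact div_le_div₀ (by positivity) hnum hdenpos hden
    · have hgy : g y = 0 := by rw [hgdef]; simp only; rw [if_neg hy]
      have : F y = 0 := by simp [hFdef, hgy, hgx]
      rw [this, norm_zero]
      positivity
  have hFint : Integrable F := by
    have heq : F = (Ioo (-(2*r)) (2*r)).indicator F := by
      funext y
      by_cases hy : y ∈ Ioo (-(2*r)) (2*r)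
      · rw [indicator_of_mem hy]
      · rw [indicator_of_notMem hy, hFsupp y hy]
    rw [heq]
    apply MeasureTheory.IntegrableOn.integrable_indicator _ measurableSet_Ioo
    apply MeasureTheory.Measure.integrableOn_of_bounded
    · exact (measure_Ioo_lt_top).ne
    · exact hFmeas.aestronglyMeasurable
    · exact Filter.Eventually.of_forall hFbdd
  -- restrict to S = Ioo (3r/2) (2r)
  set S : Set ℝ := Ioo (3*r/2) (2*r) with hSdef
  have hSmeas : MeasurableSet S := measurableSet_Ioo
  have step1 : ∫ y : ℝ, F y ≤ ∫ y in S, F y := by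
    have := MeasureTheory.integral_add_compl hSmeas hFint
    have h2 : ∫ y in Sᶜ, F y ≤ 0 :=
      MeasureTheory.integral_nonpos fun y => hF_nonpos y
    linarith
  -- majorant on S
  set h : ℝ → ℝ := fun y => -(C / (3*r) ^ (1+2*s)) * y ^ (2*s-1) with hhdef
  have hhint : IntegrableOn h S := by
    apply Integrable.const_mul
    have : IntervalIntegrable (fun y : ℝ => y ^ (2*s-1)) volume (3*r/2) (2*r) :=
      intervalIntegral.intervalIntegrable_rpow (Or.inl (by linarith))
    have h2 : IntegrableOn (fun y : ℝ => y ^ (2*s-1)) (Ioc (3*r/2) (2*r)) :=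
      (intervalIntegrable_iff_integrableOn_Ioc_of_le (by linarith)).mp this
    exact h2.mono_set Ioo_subset_Ioc_self
  have step2 : ∫ y in S, F y ≤ ∫ y in S, h y := by
    apply MeasureTheory.setIntegral_mono_on hFint.integrableOn hhint hSmeas
    intro y hy
    obtain ⟨hy1, hy2⟩ := hy
    have hypos : 0 < y := by linarith
    have hyabs : |y| = y := abs_of_pos hypos
    have hcond : 3*r/2 < |y| ∧ |y| < 2*r := by rw [hyabs]; exact ⟨hy1, hy2⟩
    have hgy : g y = C * y ^ (2*s-1) := by
      rw [hgdef]; simp only; rw [if_pos hcond, hyabs]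
    have hxyle : |x - y| ≤ 3*r := by
      have := abs_sub x y
      calc |x - y| ≤ |x| + |y| := abs_sub _ _
        _ ≤ 3*r := by rw [hyabs]; linarith
    have hxyge : r/2 ≤ |x - y| := by
      have h3 : |y| - |x| ≤ |y - x| := abs_sub_abs_le_abs_sub y x
      rw [abs_sub_comm] at h3
      rw [hyabs] at h3
      linarith
    have hdle : |x - y| ^ (1+2*s) ≤ (3*r) ^ (1+2*s) :=
      Real.rpow_le_rpow (abs_nonneg _) hxyle (by linarith)
    have hdpos : (0:ℝ) < |x - y| ^ (1+2*s) := Real.rpow_pos_of_pos (by linarith) _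
    have hnum : 0 ≤ C * y ^ (2*s-1) := by positivity
    have key : C * y ^ (2*s-1) / (3*r) ^ (1+2*s) ≤ C * y ^ (2*s-1) / |x - y| ^ (1+2*s) :=
      div_le_div_of_nonneg_left hnum hdpos hdle
    have hFy : F y = -(C * y ^ (2*s-1) / |x - y| ^ (1+2*s)) := by
      rw [hFdef]; simp only
      rw [hgx, hgy, zero_sub, neg_div]
    rw [hFy, hhdef]
    simp only
    rw [neg_mul, neg_le_neg_iff, div_mul_eq_mul_div]
    exact key
  -- compute the integral of the majorant
  have hIoo : ∫ y in S, (fun y : ℝ => y ^ (2*s-1)) y = ∫ t in (3*r/2)..(2*r), t ^ (2*s-1) := by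
    rw [intervalIntegral.integral_of_le (by linarith : 3*r/2 ≤ 2*r),
      MeasureTheory.integral_Ioc_eq_integral_Ioo]
  set I : ℝ := ∫ t in (3*r/2)..(2*r), t ^ (2*s-1) with hIdef
  have step3 : ∫ y in S, h y = -(C / (3*r) ^ (1+2*s)) * I := by
    rw [hhdef]
    rw [MeasureTheory.integral_const_mul]
    rw [← hIoo]
  -- I ≥ 0 and the algebraic identity
  have hIval : I = (((2:ℝ)^(2*s) - (3/2:ℝ)^(2*s))/(2*s)) * r ^ (2*s) := by
    rw [hIdef, integral_rpow (Or.inl (by linarith))]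
    have e1 : 2*s - 1 + 1 = 2*s := by ring
    rw [e1]
    have e2 : (2*r) ^ (2*s) = (2:ℝ)^(2*s) * r ^ (2*s) :=
      Real.mul_rpow (by norm_num) hr0.le
    have e3 : (3*r/2) ^ (2*s) = (3/2:ℝ)^(2*s) * r ^ (2*s) := by
      rw [show 3*r/2 = (3/2)*r by ring]
      exact Real.mul_rpow (by norm_num) hr0.le
    rw [e2, e3]
    ring
  have halg : -(C / (3*r) ^ (1+2*s)) * I
      = -C * ((3:ℝ) ^ (-(1+2*s))) * r⁻¹ * I / r ^ (2*s) := by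
    have e1 : (3*r) ^ (1+2*s) = 3 ^ (1+2*s) * r ^ (1+2*s) :=
      Real.mul_rpow (by norm_num) hr0.le
    have e2 : r ^ (1+2*s) = r * r ^ (2*s) := by
      rw [Real.rpow_add hr0, Real.rpow_one]
    have e3 : (3:ℝ) ^ (-(1+2*s)) = ((3:ℝ) ^ (1+2*s))⁻¹ := Real.rpow_neg (by norm_num) _
    have h3pos : (0:ℝ) < (3:ℝ) ^ (1+2*s) := Real.rpow_pos_of_pos (by norm_num) _
    rw [e1, e2, e3]
    field_simp
  refine ⟨?_, ?_⟩
  · calc fracLap1 s g x = ∫ y : ℝ, F y := hfval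
      _ ≤ ∫ y in S, F y := step1
      _ ≤ ∫ y in S, h y := step2
      _ = -(C / (3*r) ^ (1+2*s)) * I := step3
      _ = -C * ((3:ℝ) ^ (-(1+2*s))) * r⁻¹ * I / r ^ (2*s) := halg
  · rw [hIval]
    have : -C * (3:ℝ) ^ (-(1+2*s)) * r⁻¹ *
        ((((2:ℝ)^(2*s) - (3/2:ℝ)^(2*s))/(2*s)) * r ^ (2*s)) / r ^ (2*s)
        = -C * ((3:ℝ) ^ (-(1+2*s)) * (((2:ℝ)^(2*s) - (3/2:ℝ)^(2*s))/(2*s))) * r⁻¹ := by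
      field_simp
    rw [this]
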